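/- Let a < b be coprime positive integers. The simplicial complex Ass(a,b) is flag: if F is a set of a,b-admissible diagonals of P_{b+1} with |F| ≥ 2 such that every 2-element subset of F is a face of Ass(a,b), then F itself is a face of Ass(a,b). -/

import Mathlib

/-- `S(a,b) = { ⌊ib/a⌋ : i = 1, …, a-1 }`. -/
def Sab (a b : ℕ) : Finset ℕ := (Finset.Icc 1 (a - 1)).image (fun i => i * b / a)

/-- A diagonal of the polygon `P_{b+1}` with boundary points `0, 1, …, b`:
a pair `i < j` with `j - i ≥ 2` and `(i, j) ≠ (0, b)`. -/
def IsDiagonal (b i j : ℕ) : Prop := i + 2 ≤ j ∧ j ≤ b ∧ ¬(i = 0 ∧ j = b)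

/-- A diagonal `ij` is `a,b`-admissible if it separates `j - i - 1` and `b - j + i`
boundary points, both of which lie in `S(a,b)`. -/
def Admissible (a b : ℕ) (d : ℕ × ℕ) : Prop :=
  IsDiagonal b d.1 d.2 ∧ d.2 - d.1 - 1 ∈ Sab a b ∧ b - d.2 + d.1 ∈ Sab a b

/-- Two diagonals `ij` and `km` cross if `i < k < j < m` or `k < i < m < j`. -/
def Crosses (d d' : ℕ × ℕ) : Prop :=
  (d.1 < d'.1 ∧ d'.1 < d.2 ∧ d.2 < d'.2) ∨ (d'.1 < d.1 ∧ d.1 < d'.2 ∧ d'.2 < d.2)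

/-- An `a,b`-Dyck path: a north/east lattice path from `(0,0)` to `(b,a)` staying weakly
above `y = (a/b) x`.  It is encoded by the height `h u` of its unique east step over the
column interval `[u, u+1]`, for `0 ≤ u < b`; we normalize `h u = a` for `u ≥ b`. -/
structure DyckPath (a b : ℕ) where
  h : ℕ → ℕ
  mono : Monotone h
  norm : ∀ x, b ≤ x → h x = a
  above : ∀ x, x < b → a * (x + 1) ≤ b * h x

/-- The lattice point `(x, y)` lies on `D` at the bottom of a north step of `D`. -/
def BottomNorth (a b : ℕ) (D : DyckPath a b) (x y : ℕ) : Prop :=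
  x ≤ b ∧ (if x = 0 then 0 else D.h (x - 1)) ≤ y ∧ y < D.h x

/-- The laser of slope `a/b` fired northeast from the lattice point `(x, y)` of `D` first
hits `D` in the interior of the east step whose right endpoint has `x`-coordinate `k`;
the associated laser diagonal is `d(P) = (x, k)`.  The laser passes strictly below the
right endpoint of every earlier east step and strictly above the one it hits. -/
def IsLaserDiag (a b : ℕ) (D : DyckPath a b) (x y k : ℕ) : Prop :=
  x < k ∧ k ≤ b ∧ b * D.h (k - 1) < b * y + a * (k - x) ∧
    ∀ u, x ≤ u → u + 1 < k → b * y + a * (u + 1 - x) < b * D.h u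

/-- `F(D)`: the set of laser diagonals `d(P)` of the lattice points `P ≠ (0,0)` at the
bottoms of north steps of `D`. -/
def FD (a b : ℕ) (D : DyckPath a b) : Set (ℕ × ℕ) :=
  { d | ∃ y, BottomNorth a b D d.1 y ∧ (d.1, y) ≠ (0, 0) ∧ IsLaserDiag a b D d.1 y d.2 }

/-- A finite abstract simplicial complex on the ground set `E`: a downward closed
collection of finite subsets of `E`. -/
structure AbsCplx (E : Type*) where
  faces : Set (Finset E)
  down : ∀ F ∈ faces, ∀ F' ⊆ F, F' ∈ faces

/-- The rational associahedron `Âss(a,b)`: faces are the sets of pairwise noncrossing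
`a,b`-admissible diagonals. -/
def hatAss (a b : ℕ) : AbsCplx (ℕ × ℕ) where
  faces := { F | (∀ d ∈ F, Admissible a b d) ∧ ∀ d ∈ F, ∀ d' ∈ F, ¬Crosses d d' }
  down := fun F hF F' hsub =>
    ⟨fun d hd => hF.1 d (hsub hd), fun d hd d' hd' => hF.2 d (hsub hd) d' (hsub hd')⟩

/-- The rational associahedron `Ass(a,b)`: faces are the subsets of the sets `F(D)`,
as `D` ranges over `a,b`-Dyck paths. -/
def Ass (a b : ℕ) : AbsCplx (ℕ × ℕ) where
  faces := { F | ∃ D : DyckPath a b, ∀ d ∈ F, d ∈ FD a b D }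
  down := fun F hF F' hsub =>
    let ⟨D, hD⟩ := hF
    ⟨D, fun d hd => hD d (hsub hd)⟩


namespace AssFlag

def Lv (d : ℕ × ℕ) : ℕ := d.2 - d.1
def rv (a b : ℕ) (d : ℕ × ℕ) : ℕ := a * Lv d % b
def qv (a b : ℕ) (d : ℕ × ℕ) : ℕ := a * Lv d / b
def Kc (a b : ℕ) (x : ℕ) : ℕ := (a * x + b - 1) / b

section Arith

variable {a b : ℕ}

lemma qr_eq (d : ℕ × ℕ) : b * qv a b d + rv a b d = a * Lv d := by
  rw [qv, rv]; exact Nat.div_add_mod _ b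

lemma rv_lt_b (hb : 0 < b) (d : ℕ × ℕ) : rv a b d < b := Nat.mod_lt _ hb

lemma Kc_spec (hb : 0 < b) (x : ℕ) :
    a * x ≤ b * Kc a b x ∧ b * Kc a b x < a * x + b := by
  have h := Nat.div_add_mod (a * x + b - 1) b
  have h2 : (a * x + b - 1) % b < b := Nat.mod_lt _ hb
  rw [Kc]; omega

lemma Kc_mono {x y : ℕ} (hxy : x ≤ y) : Kc a b x ≤ Kc a b y := by
  apply Nat.div_le_div_right; have := Nat.mul_le_mul_left a hxy; omega

lemma Kc_b (hb : 0 < b) : Kc a b b = a := by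
  have h := Kc_spec (a := a) hb b
  have h1 : a ≤ Kc a b b := by
    have h3 := h.1; rw [Nat.mul_comm a b] at h3
    exact Nat.le_of_mul_le_mul_left h3 hb
  have h2 : Kc a b b < a + 1 := by
    apply Nat.lt_of_mul_lt_mul_left (a := b)
    have h4 := h.2
    rw [Nat.mul_add, Nat.mul_comm b a]; omega
  omega

lemma Kc_le_a (hb : 0 < b) {x : ℕ} (hx : x ≤ b) : Kc a b x ≤ a := by
  calc Kc a b x ≤ Kc a b b := Kc_mono hx
  _ = a := Kc_b hb

lemma Kc_add_div_le (hb : 0 < b) (i L : ℕ) : Kc a b i + a * L / b ≤ Kc a b (i + L) := by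
  have h1 := Kc_spec (a := a) hb i
  have h2 := Kc_spec (a := a) hb (i + L)
  have h3 := Nat.div_add_mod (a * L) b
  have h4 : a * L % b < b := Nat.mod_lt _ hb
  have key : b * (Kc a b i + a * L / b) < b * (Kc a b (i + L) + 1) := by
    have e1 : a * (i + L) = a * i + a * L := by ring
    have e2 : b * (Kc a b i + a * L / b) = b * Kc a b i + b * (a * L / b) := by ring
    have e3 : b * (Kc a b (i + L) + 1) = b * Kc a b (i + L) + b := by ring
    omega
  have h5 := Nat.lt_of_mul_lt_mul_left key
  omega

lemma div_add_div_le (hb : 0 < b) (x y : ℕ) : x / b + y / b ≤ (x + y) / b := by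
  rw [Nat.le_div_iff_mul_le hb, Nat.add_mul]
  have := Nat.div_mul_le_self x b
  have := Nat.div_mul_le_self y b
  omega

end Arith

/-- chains of diagonals marching left to right inside `[lo, hi]` -/
def Chain (F : Finset (ℕ × ℕ)) : ℕ → ℕ → List (ℕ × ℕ) → Prop
  | lo, hi, [] => lo ≤ hi
  | lo, hi, x :: T => x ∈ F ∧ lo ≤ x.1 ∧ x.2 ≤ hi ∧ Chain F x.2 hi T

def Sq (a b : ℕ) (T : List (ℕ × ℕ)) : ℕ := (T.map (qv a b)).sum
def Sr (a b : ℕ) (T : List (ℕ × ℕ)) : ℕ := (T.map (rv a b)).sum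
def SL (T : List (ℕ × ℕ)) : ℕ := (T.map Lv).sum

section ChainLemmas

variable {a b : ℕ} {F : Finset (ℕ × ℕ)}

lemma Sq_nil : Sq a b [] = 0 := rfl
lemma Sq_cons (x : ℕ × ℕ) (T : List (ℕ × ℕ)) : Sq a b (x :: T) = qv a b x + Sq a b T := by
  simp [Sq]
lemma Sr_cons (x : ℕ × ℕ) (T : List (ℕ × ℕ)) : Sr a b (x :: T) = rv a b x + Sr a b T := by
  simp [Sr]
lemma SL_cons (x : ℕ × ℕ) (T : List (ℕ × ℕ)) : SL (x :: T) = Lv x + SL T := by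
  simp [SL]

variable {hDFdummy : True}

lemma chain_le (hDF : ∀ d ∈ F, d.1 + 2 ≤ d.2 ∧ d.2 ≤ b ∧ 1 ≤ rv a b d ∧ rv a b d < a) : ∀ {T lo hi}, Chain F lo hi T → lo ≤ hi := by
  intro T
  induction T with
  | nil => intro lo hi h; exact h
  | cons x T ih =>
    intro lo hi h
    obtain ⟨hx, h1, h2, h3⟩ := h
    have := (hDF x hx).1
    have := ih h3
    omega

lemma chain_len (hDF : ∀ d ∈ F, d.1 + 2 ≤ d.2 ∧ d.2 ≤ b ∧ 1 ≤ rv a b d ∧ rv a b d < a) : ∀ {T lo hi}, Chain F lo hi T → lo + SL T ≤ hi := by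
  intro T
  induction T with
  | nil => intro lo hi h; simpa [SL, Chain] using h
  | cons x T ih =>
    intro lo hi h
    obtain ⟨hx, h1, h2, h3⟩ := h
    have h4 := (hDF x hx).1
    have h5 := ih h3
    rw [SL_cons]; rw [Lv]; omega

lemma chain_sum : ∀ (T : List (ℕ × ℕ)), b * Sq a b T + Sr a b T = a * SL T := by
  intro T
  induction T with
  | nil => simp [Sq, Sr, SL]
  | cons x T ih =>
    rw [Sq_cons, Sr_cons, SL_cons]
    have := qr_eq (a := a) (b := b) x
    have e1 : b * (qv a b x + Sq a b T) = b * qv a b x + b * Sq a b T := by ring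
    have e2 : a * (Lv x + SL T) = a * Lv x + a * SL T := by ring
    omega

lemma chain_sr_pos (hDF : ∀ d ∈ F, d.1 + 2 ≤ d.2 ∧ d.2 ≤ b ∧ 1 ≤ rv a b d ∧ rv a b d < a) : ∀ {T lo hi}, Chain F lo hi T → T ≠ [] → 1 ≤ Sr a b T := by
  intro T lo hi h hne
  match T, h with
  | x :: T, ⟨hx, _, _, _⟩ =>
    have := (hDF x hx).2.2.1
    rw [Sr_cons]; omega

lemma chain_last (hDF : ∀ d ∈ F, d.1 + 2 ≤ d.2 ∧ d.2 ≤ b ∧ 1 ≤ rv a b d ∧ rv a b d < a) : ∀ {T lo hi}, Chain F lo hi T → T ≠ [] →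
    ∃ x, x ∈ F ∧ lo ≤ x.1 ∧ x.2 ≤ hi ∧ lo + SL T ≤ x.2 ∧ rv a b x ≤ Sr a b T := by
  intro T
  induction T with
  | nil => intro lo hi _ hne; exact absurd rfl hne
  | cons x T ih =>
    intro lo hi h _
    obtain ⟨hx, h1, h2, h3⟩ := h
    have hx2 := (hDF x hx).1
    rcases T with _ | ⟨y, T'⟩
    · refine ⟨x, hx, h1, h2, ?_, ?_⟩
      · rw [SL_cons]; rw [Lv]; simp [SL]; omega
      · rw [Sr_cons]; simp [Sr]
    · obtain ⟨z, hz1, hz2, hz3, hz4, hz5⟩ := ih h3 (by simp)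
      refine ⟨z, hz1, by omega, hz3, ?_, ?_⟩
      · rw [SL_cons, Lv]; omega
      · rw [Sr_cons]; omega

lemma chain_split : ∀ {T lo hi} (mid : ℕ), Chain F lo hi T → lo ≤ mid → mid ≤ hi →
    (∀ x ∈ T, x.1 < mid → x.2 ≤ mid) →
    ∃ T₁ T₂, Chain F lo mid T₁ ∧ Chain F mid hi T₂ ∧ Sq a b T = Sq a b T₁ + Sq a b T₂ := by
  intro T
  induction T with
  | nil => intro lo hi mid h h1 h2 _; exact ⟨[], [], h1, h2, by simp [Sq]⟩
  | cons x T ih =>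
    intro lo hi mid h h1 h2 hcl
    obtain ⟨hx, hx1, hx2, hx3⟩ := h
    by_cases hc : x.1 < mid
    · have hxm : x.2 ≤ mid := hcl x (by simp) hc
      obtain ⟨T₁, T₂, hT1, hT2, hTs⟩ := ih mid hx3 hxm h2
        (fun z hz hz2 => hcl z (List.mem_cons_of_mem x hz) hz2)
      exact ⟨x :: T₁, T₂, ⟨hx, hx1, hxm, hT1⟩, hT2, by rw [Sq_cons, Sq_cons]; omega⟩
    · exact ⟨[], x :: T, h1, ⟨hx, by omega, hx2, hx3⟩, by simp [Sq]⟩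

lemma QCF' (hDF : ∀ d ∈ F, d.1 + 2 ≤ d.2 ∧ d.2 ≤ b ∧ 1 ≤ rv a b d ∧ rv a b d < a) (hb : 0 < b) {I J Q R : ℕ} (hQR : b * Q + R = a * (J - I)) (hRb : R < b)
    {T : List (ℕ × ℕ)} {lo : ℕ} (hI : I ≤ lo) (hch : Chain F lo J T) :
    Sq a b T ≤ Q := by
  have hlen := chain_len hDF hch
  have hsum := chain_sum (a := a) (b := b) T
  have hSLle : SL T ≤ J - I := by omega
  set G := (J - I) - SL T with hG
  have hsplit : a * (J - I) = a * SL T + a * G := by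
    rw [hG, ← Nat.mul_add]; congr 1; omega
  by_contra hcon
  push_neg at hcon
  have : b * (Q + 1) ≤ b * Sq a b T := Nat.mul_le_mul_left b hcon
  have e : b * (Q + 1) = b * Q + b := by ring
  omega

lemma QCU1 (hDF : ∀ d ∈ F, d.1 + 2 ≤ d.2 ∧ d.2 ≤ b ∧ 1 ≤ rv a b d ∧ rv a b d < a) (hb : 0 < b) {T : List (ℕ × ℕ)} {lo : ℕ} (hch : Chain F lo b T) (hne : T ≠ []) :
    Sq a b T + 1 ≤ a := by
  have hlen := chain_len hDF hch
  have hsum := chain_sum (a := a) (b := b) T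
  have hsr := chain_sr_pos hDF hch hne
  have hSL : a * SL T ≤ a * b := Nat.mul_le_mul_left a (by omega)
  by_contra hcon
  push_neg at hcon
  have : b * a ≤ b * Sq a b T := Nat.mul_le_mul_left b (by omega)
  have e : b * a = a * b := by ring
  omega

lemma KX (hDF : ∀ d ∈ F, d.1 + 2 ≤ d.2 ∧ d.2 ≤ b ∧ 1 ≤ rv a b d ∧ rv a b d < a) (hb : 0 < b) {I J Q R : ℕ} (hQR : b * Q + R = a * (J - I)) (hRa : R < a)
    (hSJt : ∀ x ∈ F, x.2 = J → I < x.1 → R < rv a b x)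
    {m : ℕ} (hm1 : I < m) (hm2 : m < J) {T : List (ℕ × ℕ)} (hch : Chain F m J T) :
    1 + a * (m - I) / b + Sq a b T ≤ Q := by
  set C := m - I with hC
  have hdm := Nat.div_add_mod (a * C) b
  have hV : a * C % b < b := Nat.mod_lt _ hb
  have hlen := chain_len hDF hch
  have hsum := chain_sum (a := a) (b := b) T
  have hSLle : SL T ≤ J - m := by omega
  set G := (J - m) - SL T with hG
  have hsplit : a * (J - I) = a * C + a * SL T + a * G := by
    rw [← Nat.mul_add, ← Nat.mul_add]; congr 1; omega
  -- key claim
  have hkey : R + 1 ≤ Sr a b T + a * G := by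
    rcases Nat.eq_zero_or_pos G with hG0 | hGpos
    · -- chain tight at the right: last element ends at J, use same-j hypothesis
      have hTne : T ≠ [] := by
        intro hTnil
        have hSL0 : SL T = 0 := by rw [hTnil]; rfl
        omega
      obtain ⟨x, hxF, hxm, hxJ, hxlen, hxr⟩ := chain_last hDF hch hTne
      have hx2 : x.2 = J := by omega
      have := hSJt x hxF hx2 (by omega)
      omega
    · have : a * 1 ≤ a * G := Nat.mul_le_mul_left a hGpos
      omega
  by_contra hcon
  push_neg at hcon
  have hmul : b * Q ≤ b * (a * C / b + Sq a b T) :=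
    Nat.mul_le_mul_left b (by omega)
  have e : b * (a * C / b + Sq a b T) = b * (a * C / b) + b * Sq a b T := by ring
  omega

lemma KC (hDF : ∀ d ∈ F, d.1 + 2 ≤ d.2 ∧ d.2 ≤ b ∧ 1 ≤ rv a b d ∧ rv a b d < a) (hb : 0 < b) : ∀ {T : List (ℕ × ℕ)} {lo hi : ℕ}, Chain F lo hi T →
    Kc a b lo + Sq a b T ≤ Kc a b hi := by
  intro T
  induction T with
  | nil =>
    intro lo hi h
    have : Kc a b lo ≤ Kc a b hi := by
      apply Nat.div_le_div_right
      have : a * lo ≤ a * hi := Nat.mul_le_mul_left a h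
      omega
    simpa [Sq]
  | cons x T ih =>
    intro lo hi h
    obtain ⟨hx, h1, h2, h3⟩ := h
    have hx2 := (hDF x hx).1
    have k1 : Kc a b lo ≤ Kc a b x.1 := by
      apply Nat.div_le_div_right
      have : a * lo ≤ a * x.1 := Nat.mul_le_mul_left a h1
      omega
    have k2 : Kc a b x.1 + a * Lv x / b ≤ Kc a b x.2 := by
      have := Kc_add_div_le (a := a) hb x.1 (Lv x)
      have e : x.1 + Lv x = x.2 := by rw [Lv]; omega
      rwa [e] at this
    have k3 := ih h3
    rw [Sq_cons, qv]
    omega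

lemma floor_chain (hb : 0 < b) : ∀ {T : List (ℕ × ℕ)} {lo hi A B : ℕ},
    Chain F lo hi T → A + SL T ≤ B → a * A / b + Sq a b T ≤ a * B / b := by
  intro T
  induction T with
  | nil =>
    intro lo hi A B _ hAB
    simp only [Sq, List.map_nil, List.sum_nil, Nat.add_zero]
    apply Nat.div_le_div_right
    exact Nat.mul_le_mul_left a (by simp [SL] at hAB; omega)
  | cons x T ih =>
    intro lo hi A B h hAB
    obtain ⟨hx, h1, h2, h3⟩ := h
    have step : a * A / b + a * Lv x / b ≤ a * (A + Lv x) / b := by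
      have := div_add_div_le hb (a * A) (a * Lv x)
      rwa [← Nat.mul_add] at this
    have := ih h3 (show (A + Lv x) + SL T ≤ B by rw [SL_cons] at hAB; omega)
    rw [Sq_cons, qv]
    omega

end ChainLemmas

section YDef

variable {a b : ℕ} {F : Finset (ℕ × ℕ)}

/-- lower bounds imposed on the laser height of `d` by the laser of `s` -/
def bnd (a b : ℕ) (yf : ℕ × ℕ → ℕ) (d s : ℕ × ℕ) : ℕ :=
  max (max (if s.2 ≤ d.1 then yf s + qv a b s else 0)
    (if s.1 < d.1 ∧ d.2 ≤ s.2 then yf s + 1 + a * (d.1 - s.1) / b else 0))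
    (if s.1 ≤ d.1 ∧ d.2 < s.2 then (yf s + 1 + a * (d.2 - s.1) / b) - qv a b d else 0)

def basev (a b : ℕ) (d : ℕ × ℕ) : ℕ := max (max 1 (Kc a b d.1)) (Kc a b d.2 - qv a b d)

def Yf (a b : ℕ) (F : Finset (ℕ × ℕ)) : ℕ → (ℕ × ℕ) → ℕ
  | 0, _ => 0
  | n+1, d => max (basev a b d) (F.sup (bnd a b (Yf a b F n) d))

def wm (b : ℕ) (d : ℕ × ℕ) : ℕ := d.1 * (b + 2) + (b - d.2)

def yv (a b : ℕ) (F : Finset (ℕ × ℕ)) (d : ℕ × ℕ) : ℕ := Yf a b F (wm b d + 1) d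

lemma wm_lt_of_fst {s d : ℕ × ℕ} (h : s.1 < d.1) : wm b s < wm b d := by
  rw [wm, wm]
  have h1 : (s.1 + 1) * (b + 2) ≤ d.1 * (b + 2) := Nat.mul_le_mul_right _ (by omega)
  have h2 : (s.1 + 1) * (b + 2) = s.1 * (b + 2) + (b + 2) := by ring
  omega

lemma wm_lt_of_snd {s d : ℕ × ℕ} (h1 : s.1 = d.1) (h2 : d.2 < s.2) (h3 : s.2 ≤ b) :
    wm b s < wm b d := by
  rw [wm, wm, h1]; omega

lemma wm_branch (hDF : ∀ d ∈ F, d.1 + 2 ≤ d.2 ∧ d.2 ≤ b ∧ 1 ≤ rv a b d ∧ rv a b d < a)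
    {s d : ℕ × ℕ} (hs : s ∈ F)
    (hact : s.2 ≤ d.1 ∨ (s.1 < d.1 ∧ d.2 ≤ s.2) ∨ (s.1 ≤ d.1 ∧ d.2 < s.2)) :
    wm b s < wm b d := by
  have hsd := hDF s hs
  rcases hact with h | h | h
  · exact wm_lt_of_fst (by omega)
  · exact wm_lt_of_fst h.1
  · rcases Nat.lt_or_ge s.1 d.1 with h' | h'
    · exact wm_lt_of_fst h'
    · exact wm_lt_of_snd (by omega) h.2 hsd.2.1

lemma Yf_stab (hDF : ∀ d ∈ F, d.1 + 2 ≤ d.2 ∧ d.2 ≤ b ∧ 1 ≤ rv a b d ∧ rv a b d < a) :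
    ∀ n d, wm b d < n → Yf a b F n d = Yf a b F (wm b d + 1) d := by
  intro n
  induction n using Nat.strong_induction_on with
  | _ n IH =>
    intro d hd
    match n, hd with
    | n + 1, hd =>
      show max (basev a b d) (F.sup (bnd a b (Yf a b F n) d))
          = max (basev a b d) (F.sup (bnd a b (Yf a b F (wm b d)) d))
      congr 1
      apply Finset.sup_congr rfl
      intro s hs
      by_cases hact : s.2 ≤ d.1 ∨ (s.1 < d.1 ∧ d.2 ≤ s.2) ∨ (s.1 ≤ d.1 ∧ d.2 < s.2)
      · have hws : wm b s < wm b d := wm_branch hDF hs hact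
        have e1 : Yf a b F n s = Yf a b F (wm b s + 1) s := IH n (by omega) s (by omega)
        have e2 : Yf a b F (wm b d) s = Yf a b F (wm b s + 1) s := IH (wm b d) (by omega) s hws
        rw [bnd, bnd, e1, e2]
      · push_neg at hact
        obtain ⟨h1, h2, h3⟩ := hact
        have n1 : ¬ s.2 ≤ d.1 := by omega
        have n2 : ¬ (s.1 < d.1 ∧ d.2 ≤ s.2) := by
          intro hh; have := h2 hh.1; omega
        have n3 : ¬ (s.1 ≤ d.1 ∧ d.2 < s.2) := by
          intro hh; have := h3 hh.1; omega
        rw [bnd, bnd, if_neg n1, if_neg n1, if_neg n2, if_neg n2, if_neg n3, if_neg n3]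

lemma y_spec (hDF : ∀ d ∈ F, d.1 + 2 ≤ d.2 ∧ d.2 ≤ b ∧ 1 ≤ rv a b d ∧ rv a b d < a)
    (d : ℕ × ℕ) :
    yv a b F d = max (basev a b d) (F.sup (bnd a b (yv a b F) d)) := by
  show max (basev a b d) (F.sup (bnd a b (Yf a b F (wm b d)) d)) = _
  congr 1
  apply Finset.sup_congr rfl
  intro s hs
  by_cases hact : s.2 ≤ d.1 ∨ (s.1 < d.1 ∧ d.2 ≤ s.2) ∨ (s.1 ≤ d.1 ∧ d.2 < s.2)
  · have hws : wm b s < wm b d := wm_branch hDF hs hact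
    have e2 : Yf a b F (wm b d) s = Yf a b F (wm b s + 1) s := Yf_stab hDF (wm b d) s hws
    rw [bnd, bnd, e2]; rfl
  · push_neg at hact
    obtain ⟨h1, h2, h3⟩ := hact
    have n1 : ¬ s.2 ≤ d.1 := by omega
    have n2 : ¬ (s.1 < d.1 ∧ d.2 ≤ s.2) := by
      intro hh; have := h2 hh.1; omega
    have n3 : ¬ (s.1 ≤ d.1 ∧ d.2 < s.2) := by
      intro hh; have := h3 hh.1; omega
    rw [bnd, bnd, if_neg n1, if_neg n1, if_neg n2, if_neg n2, if_neg n3, if_neg n3]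

lemma yv_ge_base (hDF : ∀ d ∈ F, d.1 + 2 ≤ d.2 ∧ d.2 ≤ b ∧ 1 ≤ rv a b d ∧ rv a b d < a) (d : ℕ × ℕ) : basev a b d ≤ yv a b F d := by
  rw [y_spec hDF]; exact le_max_left _ _

lemma yv_ge_one (hDF : ∀ d ∈ F, d.1 + 2 ≤ d.2 ∧ d.2 ≤ b ∧ 1 ≤ rv a b d ∧ rv a b d < a) (d : ℕ × ℕ) : 1 ≤ yv a b F d := by
  have := yv_ge_base (F := F) hDF d
  rw [basev] at this; omega

lemma yv_ge_K1 (hDF : ∀ d ∈ F, d.1 + 2 ≤ d.2 ∧ d.2 ≤ b ∧ 1 ≤ rv a b d ∧ rv a b d < a) (d : ℕ × ℕ) : Kc a b d.1 ≤ yv a b F d := by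
  have := yv_ge_base (F := F) hDF d
  rw [basev] at this; omega

lemma yv_ge_K2 (hDF : ∀ d ∈ F, d.1 + 2 ≤ d.2 ∧ d.2 ≤ b ∧ 1 ≤ rv a b d ∧ rv a b d < a) (d : ℕ × ℕ) : Kc a b d.2 ≤ yv a b F d + qv a b d := by
  have := yv_ge_base (F := F) hDF d
  rw [basev] at this; omega

lemma yv_ge_bnd (hDF : ∀ d ∈ F, d.1 + 2 ≤ d.2 ∧ d.2 ≤ b ∧ 1 ≤ rv a b d ∧ rv a b d < a) {s d : ℕ × ℕ} (hs : s ∈ F) : bnd a b (yv a b F) d s ≤ yv a b F d := by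
  rw [y_spec hDF]
  exact le_trans (Finset.le_sup hs) (le_max_right _ _)

lemma yv_ge_b1 (hDF : ∀ d ∈ F, d.1 + 2 ≤ d.2 ∧ d.2 ≤ b ∧ 1 ≤ rv a b d ∧ rv a b d < a) {s d : ℕ × ℕ} (hs : s ∈ F) (h : s.2 ≤ d.1) :
    yv a b F s + qv a b s ≤ yv a b F d := by
  have hb := yv_ge_bnd (F := F) hDF hs (d := d)
  rw [bnd, if_pos h] at hb; omega

lemma yv_ge_b2 (hDF : ∀ d ∈ F, d.1 + 2 ≤ d.2 ∧ d.2 ≤ b ∧ 1 ≤ rv a b d ∧ rv a b d < a) {s d : ℕ × ℕ} (hs : s ∈ F) (h1 : s.1 < d.1) (h2 : d.2 ≤ s.2) :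
    yv a b F s + 1 + a * (d.1 - s.1) / b ≤ yv a b F d := by
  have hb := yv_ge_bnd (F := F) hDF hs (d := d)
  rw [bnd, if_pos (⟨h1, h2⟩ : s.1 < d.1 ∧ d.2 ≤ s.2)] at hb; omega

lemma yv_ge_b3 (hDF : ∀ d ∈ F, d.1 + 2 ≤ d.2 ∧ d.2 ≤ b ∧ 1 ≤ rv a b d ∧ rv a b d < a) {s d : ℕ × ℕ} (hs : s ∈ F) (h1 : s.1 ≤ d.1) (h2 : d.2 < s.2) :
    yv a b F s + 1 + a * (d.2 - s.1) / b ≤ yv a b F d + qv a b d := by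
  have hb := yv_ge_bnd (F := F) hDF hs (d := d)
  rw [bnd, if_pos (⟨h1, h2⟩ : s.1 ≤ d.1 ∧ d.2 < s.2)] at hb; omega

lemma yv_le (hDF : ∀ d ∈ F, d.1 + 2 ≤ d.2 ∧ d.2 ≤ b ∧ 1 ≤ rv a b d ∧ rv a b d < a) {d : ℕ × ℕ} {N : ℕ} (hbase : basev a b d ≤ N)
    (h1 : ∀ s ∈ F, s.2 ≤ d.1 → yv a b F s + qv a b s ≤ N)
    (h2 : ∀ s ∈ F, s.1 < d.1 → d.2 ≤ s.2 → yv a b F s + 1 + a * (d.1 - s.1) / b ≤ N)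
    (h3 : ∀ s ∈ F, s.1 ≤ d.1 → d.2 < s.2 →
      (yv a b F s + 1 + a * (d.2 - s.1) / b) - qv a b d ≤ N) :
    yv a b F d ≤ N := by
  rw [y_spec hDF]
  apply max_le hbase
  apply Finset.sup_le
  intro s hs
  rw [bnd]
  apply max_le (max_le ?_ ?_) ?_
  · split_ifs with h
    · exact h1 s hs h
    · omega
  · split_ifs with h
    · exact h2 s hs h.1 h.2
    · omega
  · split_ifs with h
    · exact h3 s hs h.1 h.2
    · omega

end YDef

section MainInduction

variable {a b : ℕ} {F : Finset (ℕ × ℕ)}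

lemma chain_mem (hDF : ∀ d ∈ F, d.1 + 2 ≤ d.2 ∧ d.2 ≤ b ∧ 1 ≤ rv a b d ∧ rv a b d < a) :
    ∀ {T lo hi}, Chain F lo hi T → ∀ x ∈ T, x ∈ F ∧ lo ≤ x.1 := by
  intro T
  induction T with
  | nil => intro lo hi _ x hx; simp at hx
  | cons z T ih =>
    intro lo hi h x hx
    obtain ⟨hz, h1, h2, h3⟩ := h
    rcases List.mem_cons.mp hx with rfl | hx'
    · exact ⟨hz, h1⟩
    · have hz2 := (hDF z hz).1
      have := ih h3 x hx'
      exact ⟨this.1, by omega⟩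

/-- comparison of heights of same-`j` nested diagonals -/
lemma HSJle (hDF : ∀ d ∈ F, d.1 + 2 ≤ d.2 ∧ d.2 ≤ b ∧ 1 ≤ rv a b d ∧ rv a b d < a)
    (hb : 0 < b) (hab : a < b)
    (hSJ : ∀ d ∈ F, ∀ e ∈ F, d.2 = e.2 → d.1 < e.1 → rv a b d < rv a b e)
    {s d : ℕ × ℕ} (hs : s ∈ F) (hd : d ∈ F) (h1 : s.1 < d.1) (h2 : s.2 = d.2) :
    yv a b F s + qv a b s ≤ yv a b F d + qv a b d := by
  have hb2 := yv_ge_b2 hDF hs h1 (le_of_eq h2.symm)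
  have hqs := qr_eq (a := a) (b := b) s
  have hqd := qr_eq (a := a) (b := b) d
  have hr := hSJ s hs d hd h2 h1
  have hDs := hDF s hs
  have hDd := hDF d hd
  have hL : a * (d.1 - s.1) + a * Lv d = a * Lv s := by
    rw [← Nat.mul_add]; congr 1; rw [Lv, Lv]; omega
  have haD : a * 1 ≤ a * (d.1 - s.1) := Nat.mul_le_mul_left a (by omega)
  have hqq : qv a b d + 1 ≤ qv a b s := by
    by_contra hcon
    push_neg at hcon
    have : b * qv a b s ≤ b * qv a b d := Nat.mul_le_mul_left b (by omega)
    omega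
  have hdiv : a * (d.1 - s.1) / b = qv a b s - qv a b d - 1 := by
    have he : a * (d.1 - s.1) =
        b * (qv a b s - qv a b d - 1) + (b + rv a b s - rv a b d) := by
      have e1 : b * (qv a b s - qv a b d - 1) + b * (qv a b d + 1) = b * qv a b s := by
        rw [← Nat.mul_add]; congr 1; omega
      have e2 : b * (qv a b d + 1) = b * qv a b d + b := by ring
      omega
    rw [he, Nat.mul_add_div hb, Nat.div_eq_of_lt (by omega), Nat.add_zero]
  rw [hdiv] at hb2
  omega

lemma main_step
    (hDF : ∀ d ∈ F, d.1 + 2 ≤ d.2 ∧ d.2 ≤ b ∧ 1 ≤ rv a b d ∧ rv a b d < a)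
    (hb : 0 < b) (hab : a < b)
    (hNCr : ∀ s ∈ F, ∀ d ∈ F, ¬(s.1 < d.1 ∧ d.1 < s.2 ∧ s.2 < d.2))
    (hSJ : ∀ d ∈ F, ∀ e ∈ F, d.2 = e.2 → d.1 < e.1 → rv a b d < rv a b e)
    {e : ℕ × ℕ} (he : e ∈ F)
    {It Jt Qt Rt Yt : ℕ}
    (hQR : b * Qt + Rt = a * (Jt - It)) (hRa : Rt < a)
    (hIe : It ≤ e.1) (heJ : e.2 ≤ Jt)
    (hKt : Kc a b Jt ≤ Yt + Qt)
    (hOne : ∀ T, Chain F e.1 Jt T → T ≠ [] → 1 + Sq a b T ≤ Yt + Qt)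
    (hSJt : ∀ x ∈ F, x.2 = Jt → It < x.1 → Rt < rv a b x)
    (hB1t : ∀ s ∈ F, s.2 ≤ It → yv a b F s + qv a b s ≤ Yt)
    (hB3t : ∀ s ∈ F, s.1 ≤ It → Jt < s.2 →
      yv a b F s + 1 + a * (Jt - s.1) / b ≤ Yt + Qt)
    (hSJH : ∀ s ∈ F, s.1 < It → s.2 = Jt → yv a b F s + qv a b s ≤ Yt + Qt)
    (hNCt : ∀ s ∈ F, ¬(s.1 < It ∧ It < s.2 ∧ s.2 < Jt))
    (hNCt2 : ∀ s ∈ F, ¬(It < s.1 ∧ s.1 < Jt ∧ Jt < s.2))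
    (hTgtF : ∀ s ∈ F, s.1 = It → s.2 = Jt → yv a b F s = Yt ∧ qv a b s = Qt)
    (hIHt : ∀ s ∈ F, wm b s < wm b e → It ≤ s.1 → s.2 ≤ Jt → ¬(s.1 = It ∧ s.2 = Jt) →
      ∀ T, Chain F s.2 Jt T → yv a b F s + qv a b s + Sq a b T ≤ Yt + Qt) :
    ∀ T, Chain F e.2 Jt T → yv a b F e + qv a b e + Sq a b T ≤ Yt + Qt := by
  intro T hT
  have hDe := hDF e he
  have hchET : Chain F e.1 Jt (e :: T) := ⟨he, le_refl _, heJ, hT⟩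
  have hQCe : qv a b e + Sq a b T ≤ Qt := by
    have := QCF' hDF hb hQR (by omega) hIe hchET
    rwa [Sq_cons] at this
  have hgoal : yv a b F e ≤ (Yt + Qt) - (qv a b e + Sq a b T) := by
    apply yv_le hDF
    · -- base
      rw [basev]
      have g1 : 1 + (qv a b e + Sq a b T) ≤ Yt + Qt := by
        have := hOne (e :: T) hchET (by simp)
        rw [Sq_cons] at this; omega
      have g2 : Kc a b e.1 + (qv a b e + Sq a b T) ≤ Yt + Qt := by
        have k1 : Kc a b e.1 + a * Lv e / b ≤ Kc a b e.2 := by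
          have := Kc_add_div_le (a := a) hb e.1 (Lv e)
          have he2 : e.1 + Lv e = e.2 := by rw [Lv]; omega
          rwa [he2] at this
        have k2 : Kc a b e.2 + Sq a b T ≤ Kc a b Jt := KC hDF hb hT
        have : qv a b e = a * Lv e / b := rfl
        omega
      have g3 : Kc a b e.2 + Sq a b T ≤ Kc a b Jt := KC hDF hb hT
      omega
    · -- sources entirely to the left of e
      intro s hs hse
      have hDs := hDF s hs
      have HH : yv a b F s + qv a b s + (qv a b e + Sq a b T) ≤ Yt + Qt := by
        rcases le_or_gt s.2 It with hc | hc
        · have := hB1t s hs hc; omega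
        · have hin1 : It ≤ s.1 := by
            by_contra hcon
            push_neg at hcon
            exact hNCt s hs ⟨hcon, hc, by omega⟩
          have hws : wm b s < wm b e := wm_lt_of_fst (by omega)
          have hIH := hIHt s hs hws hin1 (by omega) (by omega) (e :: T) ⟨he, hse, heJ, hT⟩
          rw [Sq_cons] at hIH; omega
      omega
    · -- containers of e on the left
      intro s hs hs1 hs2
      have hDs := hDF s hs
      have HH : yv a b F s + 1 + a * (e.1 - s.1) / b + (qv a b e + Sq a b T) ≤ Yt + Qt := by
        by_cases htg : s.1 = It ∧ s.2 = Jt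
        · obtain ⟨hY, hQ⟩ := hTgtF s hs htg.1 htg.2
          have hkx := KX hDF hb hQR hRa hSJt (m := e.1) (by omega) (by omega) hchET
          rw [Sq_cons] at hkx
          rw [htg.1] at *
          omega
        · have hqrs : b * qv a b s + rv a b s = a * (s.2 - s.1) := qr_eq s
          have hsjs : ∀ x ∈ F, x.2 = s.2 → s.1 < x.1 → rv a b s < rv a b x :=
            fun x hx h2 h1 => hSJ s hs x hx h2.symm h1
          by_cases hin : It ≤ s.1 ∧ s.2 ≤ Jt
          · -- s strictly inside the target
            obtain ⟨T₁, T₂, hT1, hT2, hTs⟩ := chain_split (a := a) (b := b) (mid := s.2) hT hs2 hin.2 (by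
              intro x hxT hx1
              obtain ⟨hxF, hxlo⟩ := chain_mem hDF hT x hxT
              by_contra hcon
              exact hNCr s hs x hxF ⟨by omega, hx1, by omega⟩)
            have hkx := KX hDF hb hqrs hDs.2.2.2 hsjs (m := e.1) hs1 (by omega)
              (T := e :: T₁) ⟨he, le_refl _, hs2, hT1⟩
            rw [Sq_cons] at hkx
            have hws : wm b s < wm b e := wm_lt_of_fst hs1
            have hIH := hIHt s hs hws hin.1 hin.2 htg T₂ hT2
            omega
          · -- s is a container of the target
            push_neg at hin
            have hcont : s.1 ≤ It ∧ Jt ≤ s.2 := by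
              rcases Nat.lt_or_ge s.1 It with h' | h'
              · constructor
                · omega
                · by_contra hcon
                  exact hNCt s hs ⟨h', by omega, by omega⟩
              · have hJlt := hin h'
                constructor
                · by_contra hcon
                  exact hNCt2 s hs ⟨by omega, by omega, by omega⟩
                · omega
            rcases Nat.lt_or_ge Jt s.2 with hjlt | hjge
            · have hb3 := hB3t s hs hcont.1 hjlt
              have hlen := chain_len hDF hchET
              have hfc : a * (e.1 - s.1) / b + Sq a b (e :: T) ≤ a * (Jt - s.1) / b :=
                floor_chain hb hchET (by omega)
              rw [Sq_cons] at hfc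
              omega
            · have hsj2 : s.2 = Jt := by omega
              have hs1t : s.1 < It := by
                rcases Nat.lt_or_ge s.1 It with h' | h'
                · exact h'
                · exact absurd ⟨by omega, hsj2⟩ htg
              have hsjh := hSJH s hs hs1t hsj2
              have hkx := KX hDF hb hqrs hDs.2.2.2 hsjs (m := e.1) hs1 (by omega)
                (T := e :: T) ⟨he, le_refl _, by omega, by rw [hsj2]; exact hT⟩
              rw [Sq_cons] at hkx
              omega
      omega
    · -- containers of e extending to the right
      intro s hs hs1 hs2
      have hDs := hDF s hs
      have HH : yv a b F s + 1 + a * (e.2 - s.1) / b + Sq a b T ≤ Yt + Qt := by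
        by_cases htg : s.1 = It ∧ s.2 = Jt
        · obtain ⟨hY, hQ⟩ := hTgtF s hs htg.1 htg.2
          have hkx := KX hDF hb hQR hRa hSJt (m := e.2) (by omega) (by omega) hT
          rw [htg.1] at *
          omega
        · have hqrs : b * qv a b s + rv a b s = a * (s.2 - s.1) := qr_eq s
          have hsjs : ∀ x ∈ F, x.2 = s.2 → s.1 < x.1 → rv a b s < rv a b x :=
            fun x hx h2 h1 => hSJ s hs x hx h2.symm h1
          by_cases hin : It ≤ s.1 ∧ s.2 ≤ Jt
          · obtain ⟨T₁, T₂, hT1, hT2, hTs⟩ := chain_split (a := a) (b := b) (mid := s.2) hT (by omega) hin.2 (by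
              intro x hxT hx1
              obtain ⟨hxF, hxlo⟩ := chain_mem hDF hT x hxT
              by_contra hcon
              exact hNCr s hs x hxF ⟨by omega, hx1, by omega⟩)
            have hkx := KX hDF hb hqrs hDs.2.2.2 hsjs (m := e.2) (by omega) hs2 hT1
            have hws : wm b s < wm b e := by
              rcases Nat.lt_or_ge s.1 e.1 with h' | h'
              · exact wm_lt_of_fst h'
              · exact wm_lt_of_snd (by omega) hs2 hDs.2.1
            have hIH := hIHt s hs hws hin.1 hin.2 htg T₂ hT2
            omega
          · push_neg at hin
            have hcont : s.1 ≤ It ∧ Jt ≤ s.2 := by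
              rcases Nat.lt_or_ge s.1 It with h' | h'
              · constructor
                · omega
                · by_contra hcon
                  exact hNCt s hs ⟨h', by omega, by omega⟩
              · have hJlt := hin h'
                constructor
                · by_contra hcon
                  exact hNCt2 s hs ⟨by omega, by omega, by omega⟩
                · omega
            rcases Nat.lt_or_ge Jt s.2 with hjlt | hjge
            · have hb3 := hB3t s hs hcont.1 hjlt
              have hlen := chain_len hDF hT
              have hfc : a * (e.2 - s.1) / b + Sq a b T ≤ a * (Jt - s.1) / b :=
                floor_chain hb hT (by omega)
              omega
            · have hsj2 : s.2 = Jt := by omega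
              have hs1t : s.1 < It := by
                rcases Nat.lt_or_ge s.1 It with h' | h'
                · exact h'
                · exact absurd ⟨by omega, hsj2⟩ htg
              have hsjh := hSJH s hs hs1t hsj2
              have hkx := KX hDF hb hqrs hDs.2.2.2 hsjs (m := e.2) (by omega) (by omega)
                (T := T) (by rw [hsj2]; exact hT)
              omega
      omega
  omega

end MainInduction

section Vpp

variable {a b : ℕ} {F : Finset (ℕ × ℕ)}

theorem Vpp
    (hDF : ∀ d ∈ F, d.1 + 2 ≤ d.2 ∧ d.2 ≤ b ∧ 1 ≤ rv a b d ∧ rv a b d < a)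
    (ha : 0 < a) (hab : a < b)
    (hNCr : ∀ s ∈ F, ∀ d ∈ F, ¬(s.1 < d.1 ∧ d.1 < s.2 ∧ s.2 < d.2))
    (hSJ : ∀ d ∈ F, ∀ e ∈ F, d.2 = e.2 → d.1 < e.1 → rv a b d < rv a b e) :
    ∀ n, ∀ e ∈ F, wm b e < n →
      ((∀ T, Chain F e.2 b T → yv a b F e + qv a b e + Sq a b T ≤ a) ∧
       (∀ d ∈ F, d.1 ≤ e.1 → e.2 ≤ d.2 → e ≠ d →
         ∀ T, Chain F e.2 d.2 T → yv a b F e + qv a b e + Sq a b T ≤ yv a b F d + qv a b d)) := by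
  have hb : 0 < b := by omega
  intro n
  induction n using Nat.strong_induction_on with
  | _ n IH =>
    intro e he hwe
    have hDe := hDF e he
    constructor
    · -- universe target
      intro T hT
      have key := main_step hDF hb hab hNCr hSJ he
        (It := 0) (Jt := b) (Qt := a) (Rt := 0) (Yt := 0)
        (by rw [Nat.sub_zero, Nat.add_zero]; ring)
        ha
        (Nat.zero_le _) hDe.2.1
        (by rw [Kc_b hb]; omega)
        (fun T' hT' hne' => by
          have := QCU1 hDF hb hT' hne'
          omega)
        (fun x hx _ _ => by have := (hDF x hx).2.2.1; omega)
        (fun s hs h => by have := (hDF s hs).1; omega)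
        (fun s hs h1 h2 => by have := (hDF s hs).2.1; omega)
        (fun s hs h1 _ => by omega)
        (fun s hs h => by omega)
        (fun s hs h => by have := (hDF s hs).2.1; omega)
        (fun s hs h1 h2 => by
          exfalso
          have hr1 := (hDF s hs).2.2.1
          have hLs : Lv s = b := by rw [Lv]; omega
          rw [rv, hLs, Nat.mul_mod_left] at hr1
          omega)
        (fun s hs hws h1 h2 h3 T' hT' => by
          have := ((IH (wm b e) (by omega) s hs hws).1) T' hT'
          omega)
        T hT
      omega
    · -- targets in F
      intro d hd hd1 hd2 hne T hT
      have hDd := hDF d hd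
      exact main_step hDF hb hab hNCr hSJ he
        (It := d.1) (Jt := d.2) (Qt := qv a b d) (Rt := rv a b d) (Yt := yv a b F d)
        (qr_eq d) hDd.2.2.2 hd1 hd2
        (yv_ge_K2 hDF d)
        (fun T' hT' hne' => by
          have h1 := yv_ge_one hDF d
          have h2 := QCF' hDF hb (qr_eq d) (by omega) hd1 hT'
          omega)
        (fun x hx h2 h1 => hSJ d hd x hx h2.symm h1)
        (fun s hs h => yv_ge_b1 hDF hs h)
        (fun s hs h1 h2 => yv_ge_b3 hDF hs h1 h2)
        (fun s hs h1 h2 => HSJle hDF hb hab hSJ hs hd h1 h2)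
        (fun s hs h => hNCr s hs d hd h)
        (fun s hs h => hNCr d hd s hs h)
        (fun s hs h1 h2 => by
          have hsd : s = d := by
            rcases s with ⟨s1, s2⟩; rcases d with ⟨d1, d2⟩
            simp only [Prod.mk.injEq]
            exact ⟨h1, h2⟩
          rw [hsd]; exact ⟨rfl, rfl⟩)
        (fun s hs hws h1 h2 h3 T' hT' => by
          have hsd : s ≠ d := by
            intro hh; rw [hh] at h3; exact h3 ⟨rfl, rfl⟩
          exact ((IH (wm b e) (by omega) s hs hws).2) d hd h1 h2 hsd T' hT')
        T hT

end Vpp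

section Construction

variable {a b : ℕ} {F : Finset (ℕ × ℕ)}

def hterm (a b : ℕ) (F : Finset (ℕ × ℕ)) (s : ℕ × ℕ) (u : ℕ) : ℕ :=
  yv a b F s + 1 + a * (min u (s.2 - 2) + 1 - s.1) / b

def hv (a b : ℕ) (F : Finset (ℕ × ℕ)) (u : ℕ) : ℕ :=
  if b ≤ u then a
  else max (Kc a b (u + 1)) (F.sup fun s => if s.1 ≤ u then hterm a b F s u else 0)

lemma qv_pos (hDF : ∀ d ∈ F, d.1 + 2 ≤ d.2 ∧ d.2 ≤ b ∧ 1 ≤ rv a b d ∧ rv a b d < a)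
    (ha : 0 < a) {s : ℕ × ℕ} (hs : s ∈ F) : 1 ≤ qv a b s := by
  have hDs := hDF s hs
  have hq := qr_eq (a := a) (b := b) s
  have h2 : a * 2 ≤ a * Lv s := Nat.mul_le_mul_left a (by rw [Lv]; omega)
  by_contra hcon
  push_neg at hcon
  interval_cases h : qv a b s
  omega

lemma hterm_le_H (hDF : ∀ d ∈ F, d.1 + 2 ≤ d.2 ∧ d.2 ≤ b ∧ 1 ≤ rv a b d ∧ rv a b d < a)
    (ha : 0 < a) (hab : a < b) {s : ℕ × ℕ} (hs : s ∈ F) (u : ℕ) :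
    hterm a b F s u ≤ yv a b F s + qv a b s := by
  have hb : 0 < b := by omega
  have hDs := hDF s hs
  have hq := qr_eq (a := a) (b := b) s
  have hq1 : 1 ≤ qv a b s := qv_pos hDF ha hs
  have harg : min u (s.2 - 2) + 1 - s.1 ≤ Lv s - 1 := by
    rw [Lv]
    have := min_le_right u (s.2 - 2)
    omega
  have hdivle : a * (min u (s.2 - 2) + 1 - s.1) / b ≤ a * (Lv s - 1) / b :=
    Nat.div_le_div_right (Nat.mul_le_mul_left a harg)
  have hdq : a * (Lv s - 1) / b = qv a b s - 1 := by
    have hL1 : 1 ≤ Lv s := by rw [Lv]; omega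
    have he : a * (Lv s - 1) = b * (qv a b s - 1) + (b + rv a b s - a) := by
      have e1 : a * (Lv s - 1) + a * 1 = a * Lv s := by
        rw [← Nat.mul_add]; congr 1; omega
      have e2 : b * (qv a b s - 1) + b * 1 = b * qv a b s := by
        rw [← Nat.mul_add]; congr 1; omega
      omega
    rw [he, Nat.mul_add_div hb, Nat.div_eq_of_lt (by omega), Nat.add_zero]
  rw [hterm]
  omega

lemma hv_body_le_a
    (hDF : ∀ d ∈ F, d.1 + 2 ≤ d.2 ∧ d.2 ≤ b ∧ 1 ≤ rv a b d ∧ rv a b d < a)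
    (ha : 0 < a) (hab : a < b)
    (hNCr : ∀ s ∈ F, ∀ d ∈ F, ¬(s.1 < d.1 ∧ d.1 < s.2 ∧ s.2 < d.2))
    (hSJ : ∀ d ∈ F, ∀ e ∈ F, d.2 = e.2 → d.1 < e.1 → rv a b d < rv a b e)
    {u : ℕ} (hu : u < b) :
    max (Kc a b (u + 1)) (F.sup fun s => if s.1 ≤ u then hterm a b F s u else 0) ≤ a := by
  have hb : 0 < b := by omega
  apply max_le
  · exact Kc_le_a hb (by omega)
  · apply Finset.sup_le
    intro s hs
    split_ifs with h2
    · have h3 := hterm_le_H hDF ha hab hs u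
      have h4 := ((Vpp hDF ha hab hNCr hSJ (wm b s + 1) s hs (Nat.lt_succ_self _)).1)
        [] (show Chain F s.2 b [] from (hDF s hs).2.1)
      have h5 : Sq a b ([] : List (ℕ × ℕ)) = 0 := rfl
      omega
    · omega

lemma hv_le_a
    (hDF : ∀ d ∈ F, d.1 + 2 ≤ d.2 ∧ d.2 ≤ b ∧ 1 ≤ rv a b d ∧ rv a b d < a)
    (ha : 0 < a) (hab : a < b)
    (hNCr : ∀ s ∈ F, ∀ d ∈ F, ¬(s.1 < d.1 ∧ d.1 < s.2 ∧ s.2 < d.2))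
    (hSJ : ∀ d ∈ F, ∀ e ∈ F, d.2 = e.2 → d.1 < e.1 → rv a b d < rv a b e)
    (u : ℕ) : hv a b F u ≤ a := by
  rw [hv]
  split_ifs with h1
  · exact le_refl a
  · exact hv_body_le_a hDF ha hab hNCr hSJ (by omega)

lemma hv_mono
    (hDF : ∀ d ∈ F, d.1 + 2 ≤ d.2 ∧ d.2 ≤ b ∧ 1 ≤ rv a b d ∧ rv a b d < a)
    (ha : 0 < a) (hab : a < b)
    (hNCr : ∀ s ∈ F, ∀ d ∈ F, ¬(s.1 < d.1 ∧ d.1 < s.2 ∧ s.2 < d.2))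
    (hSJ : ∀ d ∈ F, ∀ e ∈ F, d.2 = e.2 → d.1 < e.1 → rv a b d < rv a b e) :
    Monotone (hv a b F) := by
  intro u v huv
  rcases le_or_gt b u with h1 | h1
  · rw [hv, hv, if_pos h1, if_pos (by omega)]
  · rcases le_or_gt b v with h2 | h2
    · have hveq : hv a b F v = a := by rw [hv, if_pos h2]
      rw [hveq]
      exact hv_le_a hDF ha hab hNCr hSJ u
    · rw [hv, hv, if_neg (by omega), if_neg (by omega)]
      apply max_le
      · exact le_trans (Kc_mono (by omega)) (le_max_left _ _)
      · apply Finset.sup_le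
        intro s hs
        split_ifs with h3
        · have hle : hterm a b F s u ≤ hterm a b F s v := by
            rw [hterm, hterm]
            have : min u (s.2 - 2) ≤ min v (s.2 - 2) := by omega
            have := Nat.div_le_div_right (c := b) (Nat.mul_le_mul_left a
              (show min u (s.2-2) + 1 - s.1 ≤ min v (s.2-2) + 1 - s.1 by omega))
            omega
          refine le_trans hle (le_trans ?_ (le_max_right _ _))
          have h5 : (if s.1 ≤ v then hterm a b F s v else 0) ≤
              F.sup fun s => if s.1 ≤ v then hterm a b F s v else 0 :=
            Finset.le_sup (f := fun s => if s.1 ≤ v then hterm a b F s v else 0) hs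
          rwa [if_pos (show s.1 ≤ v by omega)] at h5
        · omega

lemma hv_ge_hterm (a : ℕ)
    {s : ℕ × ℕ} (hs : s ∈ F) {u : ℕ} (hu : u < b) (hsu : s.1 ≤ u) :
    hterm a b F s u ≤ hv a b F u := by
  rw [hv, if_neg (by omega)]
  refine le_trans ?_ (le_max_right _ _)
  have h5 : (if s.1 ≤ u then hterm a b F s u else 0) ≤
      F.sup fun s => if s.1 ≤ u then hterm a b F s u else 0 :=
    Finset.le_sup (f := fun s => if s.1 ≤ u then hterm a b F s u else 0) hs
  rwa [if_pos hsu] at h5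

/-- the constructed Dyck path -/
def DP (a b : ℕ) (F : Finset (ℕ × ℕ))
    (hDF : ∀ d ∈ F, d.1 + 2 ≤ d.2 ∧ d.2 ≤ b ∧ 1 ≤ rv a b d ∧ rv a b d < a)
    (ha : 0 < a) (hab : a < b)
    (hNCr : ∀ s ∈ F, ∀ d ∈ F, ¬(s.1 < d.1 ∧ d.1 < s.2 ∧ s.2 < d.2))
    (hSJ : ∀ d ∈ F, ∀ e ∈ F, d.2 = e.2 → d.1 < e.1 → rv a b d < rv a b e) :
    DyckPath a b where
  h := hv a b F
  mono := hv_mono hDF ha hab hNCr hSJ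
  norm := fun x hx => by rw [hv, if_pos hx]
  above := fun x hx => by
    have h1 : Kc a b (x + 1) ≤ hv a b F x := by
      rw [hv, if_neg (by omega)]; exact le_max_left _ _
    have h2 := (Kc_spec (a := a) (show 0 < b by omega) (x + 1)).1
    have h3 : b * Kc a b (x+1) ≤ b * hv a b F x := Nat.mul_le_mul_left b h1
    omega

theorem FD_mem
    (hDF : ∀ d ∈ F, d.1 + 2 ≤ d.2 ∧ d.2 ≤ b ∧ 1 ≤ rv a b d ∧ rv a b d < a)
    (ha : 0 < a) (hab : a < b)
    (hNCr : ∀ s ∈ F, ∀ d ∈ F, ¬(s.1 < d.1 ∧ d.1 < s.2 ∧ s.2 < d.2))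
    (hSJ : ∀ d ∈ F, ∀ e ∈ F, d.2 = e.2 → d.1 < e.1 → rv a b d < rv a b e)
    {d : ℕ × ℕ} (hd : d ∈ F) :
    d ∈ FD a b (DP a b F hDF ha hab hNCr hSJ) := by
  have hb : 0 < b := by omega
  have hDd := hDF d hd
  have hy1 := yv_ge_one hDF d
  refine ⟨yv a b F d, ⟨by omega, ?_, ?_⟩, ?_, by omega, hDd.2.1, ?_, ?_⟩
  · -- bottom: h(i-1) ≤ y  (or 0 ≤ y when i = 0)
    show (if d.1 = 0 then 0 else hv a b F (d.1 - 1)) ≤ yv a b F d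
    split_ifs with h0
    · omega
    · rw [hv, if_neg (by omega)]
      apply max_le
      · have : d.1 - 1 + 1 = d.1 := by omega
        rw [this]
        exact yv_ge_K1 hDF d
      · apply Finset.sup_le
        intro s hs
        have hDs := hDF s hs
        split_ifs with h2
        · rcases le_or_gt s.2 d.1 with hc | hc
          · have h3 := hterm_le_H hDF ha hab hs (d.1 - 1)
            have h4 := yv_ge_b1 hDF hs hc
            omega
          · -- container on the left
            have hs1 : s.1 < d.1 := by omega
            have hcont : d.2 ≤ s.2 := by
              by_contra hcon
              exact hNCr s hs d hd ⟨hs1, hc, by omega⟩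
            have hb2 := yv_ge_b2 hDF hs hs1 hcont
            have harg : min (d.1 - 1) (s.2 - 2) + 1 - s.1 ≤ d.1 - s.1 := by
              have := min_le_left (d.1 - 1) (s.2 - 2); omega
            have := Nat.div_le_div_right (c := b) (Nat.mul_le_mul_left a harg)
            rw [hterm]
            omega
        · omega
  · -- y < h(i)
    show yv a b F d < hv a b F d.1
    have hht := hv_ge_hterm a (F := F) hd (show d.1 < b by omega) (le_refl _)
    have hy2 : yv a b F d + 1 ≤ hterm a b F d d.1 := by
      rw [hterm]; exact Nat.le_add_right _ _
    omega
  · -- the point is not the origin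
    intro hcon
    rw [Prod.ext_iff] at hcon
    have := hcon.2
    simp at this
    omega
  · -- exit of the laser
    show b * hv a b F (d.2 - 1) < b * yv a b F d + a * (d.2 - d.1)
    have hq := qr_eq (a := a) (b := b) d
    have hcl : hv a b F (d.2 - 1) ≤ yv a b F d + qv a b d := by
      rw [hv, if_neg (by omega)]
      apply max_le
      · have e : d.2 - 1 + 1 = d.2 := by omega
        rw [e]
        exact yv_ge_K2 hDF d
      · apply Finset.sup_le
        intro s hs
        have hDs := hDF s hs
        split_ifs with h2
        · have hHs := hterm_le_H hDF ha hab hs (d.2 - 1)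
          rcases le_or_gt s.2 d.1 with hc | hc
          · have h4 := yv_ge_b1 hDF hs hc
            omega
          · rcases lt_trichotomy s.1 d.1 with h1 | h1 | h1
            · -- s is a container on the left
              have hcont : d.2 ≤ s.2 := by
                by_contra hcon
                exact hNCr s hs d hd ⟨h1, hc, by omega⟩
              rcases eq_or_lt_of_le hcont with he2 | he2
              · -- same right endpoint
                have := HSJle hDF hb hab hSJ hs hd h1 he2.symm
                omega
              · -- strict right container
                have hb3 := yv_ge_b3 hDF hs (by omega) he2
                have harg : min (d.2 - 1) (s.2 - 2) + 1 - s.1 ≤ d.2 - s.1 := by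
                  have := min_le_left (d.2 - 1) (s.2 - 2); omega
                have := Nat.div_le_div_right (c := b) (Nat.mul_le_mul_left a harg)
                rw [hterm]
                omega
            · -- same left endpoint
              rcases lt_trichotomy s.2 d.2 with h2' | h2' | h2'
              · have hne : s ≠ d := by
                  intro hh; rw [hh] at h2'; omega
                have := ((Vpp hDF ha hab hNCr hSJ (wm b s + 1) s hs (Nat.lt_succ_self _)).2)
                  d hd (by omega) (by omega) hne [] (show Chain F s.2 d.2 [] by show s.2 ≤ d.2; omega)
                have h5 : Sq a b ([] : List (ℕ × ℕ)) = 0 := rfl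
                omega
              · have hsd : s = d := by
                  rcases s with ⟨s1, s2⟩; rcases d with ⟨d1, d2⟩
                  simp only [Prod.mk.injEq]
                  simp only [] at h1 h2'
                  exact ⟨h1, h2'⟩
                rw [hsd] at hHs ⊢
                omega
              · have hb3 := yv_ge_b3 hDF hs (by omega) h2'
                have harg : min (d.2 - 1) (s.2 - 2) + 1 - s.1 ≤ d.2 - s.1 := by
                  have := min_le_left (d.2 - 1) (s.2 - 2); omega
                have := Nat.div_le_div_right (c := b) (Nat.mul_le_mul_left a harg)
                rw [hterm]
                omega
            · -- s inside d
              have hcont : s.2 ≤ d.2 := by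
                by_contra hcon
                exact hNCr d hd s hs ⟨h1, by omega, by omega⟩
              have hne : s ≠ d := by
                intro hh; rw [hh] at h1; omega
              have := ((Vpp hDF ha hab hNCr hSJ (wm b s + 1) s hs (Nat.lt_succ_self _)).2)
                d hd (by omega) hcont hne [] (show Chain F s.2 d.2 [] from hcont)
              have h5 : Sq a b ([] : List (ℕ × ℕ)) = 0 := rfl
              omega
        · omega
    have := Nat.mul_le_mul_left b hcl
    have e1 : b * (yv a b F d + qv a b d) = b * yv a b F d + b * qv a b d := by ring
    have hr1 := hDd.2.2.1
    have : a * (d.2 - d.1) = a * Lv d := rfl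
    omega
  · -- laser stays strictly below the path before exiting
    intro u hu1 hu2
    show b * yv a b F d + a * (u + 1 - d.1) < b * (DP a b F hDF ha hab hNCr hSJ).h u
    have hht := hv_ge_hterm a (F := F) hd (show u < b by omega) hu1
    have hmin : min u (d.2 - 2) = u := by omega
    rw [hterm, hmin] at hht
    have hdm := Nat.div_add_mod (a * (u + 1 - d.1)) b
    have hmod : a * (u + 1 - d.1) % b < b := Nat.mod_lt _ hb
    have := Nat.mul_le_mul_left b hht
    have e1 : b * (yv a b F d + 1 + a * (u + 1 - d.1) / b)
        = b * yv a b F d + b + b * (a * (u + 1 - d.1) / b) := by ring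
    show b * yv a b F d + a * (u + 1 - d.1) < b * hv a b F u
    omega

end Construction

section Necessity

variable {a b : ℕ}

lemma adm_extract (ha : 0 < a) (hab : a < b) (hcop : Nat.Coprime a b) {d : ℕ × ℕ}
    (h : Admissible a b d) :
    d.1 + 2 ≤ d.2 ∧ d.2 ≤ b ∧ 1 ≤ rv a b d ∧ rv a b d < a := by
  obtain ⟨⟨hd1, hd2, _⟩, hS, _⟩ := h
  rw [Sab, Finset.mem_image] at hS
  obtain ⟨s, hsI, hs⟩ := hS
  rw [Finset.mem_Icc] at hsI
  have hdm := Nat.div_add_mod (s * b) a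
  set t := s * b % a with hts
  have ht2 : t < a := Nat.mod_lt _ ha
  have ht1 : 1 ≤ t := by
    rcases Nat.eq_zero_or_pos t with h0 | h1
    · exfalso
      have hdvd : a ∣ s * b := by
        have := Nat.dvd_of_mod_eq_zero (hts ▸ h0 : s * b % a = 0)
        exact this
      have has : a ∣ s := Nat.Coprime.dvd_of_dvd_mul_right hcop hdvd
      have := Nat.le_of_dvd (by omega) has
      omega
    · exact h1
  have hL1 : a * (d.2 - d.1 - 1) + t = s * b := by rw [← hs]; exact hdm
  have he : a * Lv d = s * b + (a - t) := by
    have e1 : a * (d.2 - d.1 - 1) + a * 1 = a * Lv d := by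
      rw [← Nat.mul_add]; rw [Lv]; congr 1; omega
    omega
  have hrv : rv a b d = a - t := by
    rw [rv, he, Nat.add_comm, Nat.add_mul_mod_self_right]
    exact Nat.mod_eq_of_lt (by omega)
  exact ⟨hd1, hd2, by omega, by omega⟩

lemma no_cross_aux {D : DyckPath a b} {d e : ℕ × ℕ} {y y' : ℕ}
    (hb2 : BottomNorth a b D e.1 y')
    (hl1 : IsLaserDiag a b D d.1 y d.2) (hl2 : IsLaserDiag a b D e.1 y' e.2)
    (h1 : d.1 < e.1) (h2 : e.1 < d.2) (h3 : d.2 < e.2) : False := by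
  obtain ⟨hx1, hx2, hx3, hx4⟩ := hl1
  obtain ⟨hy1, hy2, hy3, hy4⟩ := hl2
  have hA := hx4 (e.1 - 1) (by omega) (by omega)
  have hbot : D.h (e.1 - 1) ≤ y' := by
    have := hb2.2.1
    rwa [if_neg (by omega)] at this
  have hB2 := hy4 (d.2 - 1) (by omega) (by omega)
  have e11 : e.1 - 1 + 1 = e.1 := by omega
  have e21 : d.2 - 1 + 1 = d.2 := by omega
  rw [e11] at hA
  rw [e21] at hB2
  have hsum : a * (e.1 - d.1) + a * (d.2 - e.1) = a * (d.2 - d.1) := by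
    rw [← Nat.mul_add]; congr 1; omega
  have hm : b * D.h (e.1 - 1) ≤ b * y' := Nat.mul_le_mul_left b hbot
  omega

lemma FD_no_cross {D : DyckPath a b} {d e : ℕ × ℕ}
    (hd : d ∈ FD a b D) (he : e ∈ FD a b D) : ¬ Crosses d e := by
  obtain ⟨y, hby, _, hly⟩ := hd
  obtain ⟨y', hby', _, hly'⟩ := he
  intro hc
  rcases hc with ⟨h1, h2, h3⟩ | ⟨h1, h2, h3⟩
  · exact no_cross_aux hby' hly hly' h1 h2 h3
  · exact no_cross_aux hby hly' hly h1 h2 h3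

lemma FD_samej (hab : a < b) {D : DyckPath a b} {d e : ℕ × ℕ}
    (hd2 : d.1 + 2 ≤ d.2) (he2 : e.1 + 2 ≤ e.2)
    (hd : d ∈ FD a b D) (he : e ∈ FD a b D) (hj : d.2 = e.2) (hi : d.1 < e.1) :
    rv a b d < rv a b e := by
  obtain ⟨y, hby, _, hly⟩ := hd
  obtain ⟨y', hby', _, hly'⟩ := he
  obtain ⟨hx1, hx2, hx3, hx4⟩ := hly
  obtain ⟨hy1, hy2, hy3, hy4⟩ := hly'
  set j := d.2 with hjd
  -- F1 : laser of d passes strictly below the bottom of the north step of e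
  have hA := hx4 (e.1 - 1) (by omega) (by omega)
  have hbot : D.h (e.1 - 1) ≤ y' := by
    have := hby'.2.1
    rwa [if_neg (by omega)] at this
  have e11 : e.1 - 1 + 1 = e.1 := by omega
  rw [e11] at hA
  have hm1 : b * D.h (e.1 - 1) ≤ b * y' := Nat.mul_le_mul_left b hbot
  -- F2 : the top of the north step of e is below the path at column j - 1
  have hmono : D.h e.1 ≤ D.h (j - 1) := D.mono (by omega)
  have htop : y' + 1 ≤ D.h (j - 1) := by
    have := hby'.2.2
    omega
  have hm2 : b * (y' + 1) ≤ b * D.h (j - 1) := Nat.mul_le_mul_left b htop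
  have hm2' : b * (y' + 1) = b * y' + b := by ring
  -- F4 : exit of e, rewritten at j
  rw [← hj] at hy3
  -- F5, F6 : interiors at column j - 2
  have hF5 := hx4 (j - 2) (by omega) (by omega)
  have hF6 := hy4 (j - 2) (by omega) (by omega : j - 2 + 1 < e.2)
  have e12 : j - 2 + 1 = j - 1 := by omega
  rw [e12] at hF5 hF6
  have hmono2 : b * D.h (j - 2) ≤ b * D.h (j - 1) := Nat.mul_le_mul_left b (D.mono (by omega))
  -- splitting identities
  have hsplit1 : a * (j - 1 - d.1) + a * 1 = a * (j - d.1) := by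
    rw [← Nat.mul_add]; congr 1; omega
  have hsplit2 : a * (j - 1 - e.1) + a * 1 = a * (j - e.1) := by
    rw [← Nat.mul_add]; congr 1; omega
  have hsplit3 : a * (e.1 - d.1) + a * (j - e.1) = a * (j - d.1) := by
    rw [← Nat.mul_add]; congr 1; omega
  set H := b * D.h (j - 1) with hH
  set Td := b * y + a * (j - d.1) with hTd
  set Te := b * y' + a * (j - e.1) with hTe
  have hTdH : H < Td := by omega
  have hTdH2 : Td < H + a := by omega
  have hTeH : H < Te := by omega
  have hTeH2 : Te < H + a := by omega
  have hTdTe : Td < Te := by omega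
  -- compute the remainders
  have hrd : rv a b d = Td - H := by
    have h1 : Td % b = rv a b d := by
      rw [hTd, rv]
      have : a * Lv d = a * (j - d.1) := by rw [Lv]
      rw [this, Nat.mul_add_mod]
    have h2 : Td % b = (Td - H) % b := by
      conv_lhs => rw [show Td = b * D.h (j - 1) + (Td - H) by omega]
      rw [Nat.mul_add_mod]
    rw [← h1, h2]
    exact Nat.mod_eq_of_lt (by omega)
  have hre : rv a b e = Te - H := by
    have h1 : Te % b = rv a b e := by
      rw [hTe, rv]
      have : a * Lv e = a * (j - e.1) := by rw [Lv, hj]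
      rw [this, Nat.mul_add_mod]
    have h2 : Te % b = (Te - H) % b := by
      conv_lhs => rw [show Te = b * D.h (j - 1) + (Te - H) by omega]
      rw [Nat.mul_add_mod]
    rw [← h1, h2]
    exact Nat.mod_eq_of_lt (by omega)
  omega

end Necessity

end AssFlag

/-- `Ass(a,b)` is flag: if `F` is a set of `a,b`-admissible diagonals with `|F| ≥ 2`
all of whose 2-element subsets are faces of `Ass(a,b)`, then `F` is a face of
`Ass(a,b)`. -/
theorem Ass_flag (a b : ℕ) (ha : 0 < a) (hab : a < b) (hcop : Nat.Coprime a b)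
    (F : Finset (ℕ × ℕ)) (hadm : ∀ d ∈ F, Admissible a b d) (hcard : 2 ≤ F.card)
    (hpairs : ∀ d ∈ F, ∀ d' ∈ F, d ≠ d' →
      ({d, d'} : Finset (ℕ × ℕ)) ∈ (Ass a b).faces) :
    F ∈ (Ass a b).faces := by
  classical
  have hDF : ∀ d ∈ F, d.1 + 2 ≤ d.2 ∧ d.2 ≤ b ∧
      1 ≤ AssFlag.rv a b d ∧ AssFlag.rv a b d < a :=
    fun d hd => AssFlag.adm_extract ha hab hcop (hadm d hd)
  have hNCr : ∀ s ∈ F, ∀ d ∈ F, ¬(s.1 < d.1 ∧ d.1 < s.2 ∧ s.2 < d.2) := by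
    intro s hs d hd hcon
    have hne : s ≠ d := by
      intro h; rw [h] at hcon; omega
    obtain ⟨D, hD⟩ := hpairs s hs d hd hne
    exact AssFlag.FD_no_cross (hD s (by simp)) (hD d (by simp)) (Or.inl hcon)
  have hSJ : ∀ d ∈ F, ∀ e ∈ F, d.2 = e.2 → d.1 < e.1 → AssFlag.rv a b d < AssFlag.rv a b e := by
    intro d hd e he hj hi
    have hne : d ≠ e := by
      intro h; rw [h] at hi; omega
    obtain ⟨D, hD⟩ := hpairs d hd e he hne
    exact AssFlag.FD_samej hab (hDF d hd).1 (hDF e he).1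
      (hD d (by simp)) (hD e (by simp)) hj hi
  exact ⟨AssFlag.DP a b F hDF ha hab hNCr hSJ,
    fun d hd => AssFlag.FD_mem hDF ha hab hNCr hSJ hd⟩
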